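/- Let K ≥ 2, r_k > 0, and Γ_k/w_k > 0 for k ∈ {1,…,K}. Suppose α = (α_1,…,α_K) satisfies α_k > (2^{r_k}−1)Σ_{j>k}α_j for all k, Σ_k α_k = 1, and the thresholds γ_th^k = (2^{r_k}−1)/(α_k − (2^{r_k}−1)Σ_{j>k}α_j) satisfy γ_th^1 ≤ γ_th^2 ≤ … ≤ γ_th^K. If the values γ_th^k/(Γ_k/w_k) are not all equal, then α is not a minimizer of max_k γ_th^k/(Γ_k/w_k) over the feasible set: there exists another feasible α' with strictly smaller maximum. -/

import Mathlib

open Finset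

noncomputable def aAux {K : ℕ} (c d : Fin K → ℝ) : Fin K → ℝ := fun k =>
  d k + c k * ∑ j ∈ (univ.filter (fun j => k < j)).attach, aAux c d j.1
termination_by k => K - k.val
decreasing_by
  have hj := j.2
  simp only [mem_filter, mem_univ, true_and, Fin.lt_def] at hj
  simp_wf
  omega

lemma aAux_spec {K : ℕ} (c d : Fin K → ℝ) (k : Fin K) :
    aAux c d k = d k + c k * ∑ j ∈ univ.filter (fun j => k < j), aAux c d j := by
  rw [aAux, Finset.sum_attach]

lemma aAux_pos {K : ℕ} (c d : Fin K → ℝ) (hc : ∀ k, 0 ≤ c k) (hd : ∀ k, 0 < d k)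
    (k : Fin K) : 0 < aAux c d k := by
  rw [aAux]
  have h : 0 ≤ ∑ j ∈ (univ.filter (fun j => k < j)).attach, aAux c d j.1 :=
    Finset.sum_nonneg fun j _ => le_of_lt (aAux_pos c d hc hd j.1)
  have := mul_nonneg (hc k) h
  linarith [hd k]
termination_by K - k.val
decreasing_by
  have hj := j.2
  simp only [mem_filter, mem_univ, true_and, Fin.lt_def] at hj
  simp_wf
  omega

lemma aAux_mono {K : ℕ} (c d d' : Fin K → ℝ) (hc : ∀ k, 0 ≤ c k)
    (h : ∀ k, d k ≤ d' k) (k : Fin K) : aAux c d k ≤ aAux c d' k := by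
  rw [aAux, aAux]
  have hsum : (∑ j ∈ (univ.filter (fun j => k < j)).attach, aAux c d j.1)
      ≤ ∑ j ∈ (univ.filter (fun j => k < j)).attach, aAux c d' j.1 :=
    Finset.sum_le_sum fun j _ => aAux_mono c d d' hc h j.1
  have := mul_le_mul_of_nonneg_left hsum (hc k)
  linarith [h k]
termination_by K - k.val
decreasing_by
  all_goals
    have hj := j.2
    simp only [mem_filter, mem_univ, true_and, Fin.lt_def] at hj
    simp_wf
    omega

lemma aAux_strict {K : ℕ} (c d d' : Fin K → ℝ) (hc : ∀ k, 0 ≤ c k)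
    (h : ∀ k, d k ≤ d' k) (k : Fin K) (hk : d k < d' k) :
    aAux c d k < aAux c d' k := by
  rw [aAux_spec, aAux_spec]
  have hsum : (∑ j ∈ univ.filter (fun j => k < j), aAux c d j)
      ≤ ∑ j ∈ univ.filter (fun j => k < j), aAux c d' j :=
    Finset.sum_le_sum fun j _ => aAux_mono c d d' hc h j
  have := mul_le_mul_of_nonneg_left hsum (hc k)
  linarith

lemma aAux_div {K : ℕ} (c d : Fin K → ℝ) (t : ℝ) (k : Fin K) :
    aAux c (fun k => d k / t) k = aAux c d k / t := by
  rw [aAux, aAux]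
  have hsum : (∑ j ∈ (univ.filter (fun j => k < j)).attach, aAux c (fun k => d k / t) j.1)
      = ∑ j ∈ (univ.filter (fun j => k < j)).attach, aAux c d j.1 / t :=
    Finset.sum_congr rfl fun j _ => aAux_div c d t j.1
  rw [hsum, ← Finset.sum_div]
  ring
termination_by K - k.val
decreasing_by
  have hj := j.2
  simp only [mem_filter, mem_univ, true_and, Fin.lt_def] at hj
  simp_wf
  omega

lemma aAux_unique {K : ℕ} (c d β : Fin K → ℝ)
    (hβ : ∀ k, β k = d k + c k * ∑ j ∈ univ.filter (fun j => k < j), β j)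
    (k : Fin K) : β k = aAux c d k := by
  rw [hβ k, aAux_spec]
  congr 1
  congr 1
  rw [← Finset.sum_attach (univ.filter (fun j => k < j)) β,
      ← Finset.sum_attach (univ.filter (fun j => k < j)) (aAux c d)]
  exact Finset.sum_congr rfl fun j _ => aAux_unique c d β hβ j.1
termination_by K - k.val
decreasing_by
  have hj := j.2
  simp only [mem_filter, mem_univ, true_and, Fin.lt_def] at hj
  simp_wf
  omega

/-- Proposition 2: if the weighted thresholds are not all equal at a feasible power
allocation, then that allocation is not a minimizer of the maximum weighted threshold. -/
theorem stmt_6 (K : ℕ) (hK : 2 ≤ K) (hne : (univ : Finset (Fin K)).Nonempty)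
    (r v : Fin K → ℝ) (hr : ∀ k, 0 < r k) (hv : ∀ k, 0 < v k) (hvmono : Monotone v)
    (γth : (Fin K → ℝ) → Fin K → ℝ)
    (hγth : ∀ α k, γth α k = ((2:ℝ) ^ (r k) - 1) /
        (α k - ((2:ℝ) ^ (r k) - 1) * ∑ j ∈ univ.filter (fun j => k < j), α j))
    (Feasible : (Fin K → ℝ) → Prop)
    (hFeas : ∀ α, Feasible α ↔
      (∀ k, ((2:ℝ) ^ (r k) - 1) * (∑ j ∈ univ.filter (fun j => k < j), α j) < α k) ∧
      (∑ k, α k = 1) ∧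
      (∀ k l : Fin K, k ≤ l → γth α k ≤ γth α l))
    (α : Fin K → ℝ) (hα : Feasible α)
    (hnoteq : ¬ ∀ k l : Fin K, γth α k / v k = γth α l / v l) :
    ∃ α', Feasible α' ∧
      univ.sup' hne (fun k => γth α' k / v k) < univ.sup' hne (fun k => γth α k / v k) := by
  set c : Fin K → ℝ := fun k => (2:ℝ) ^ (r k) - 1 with hc_def
  have hc : ∀ k, 0 < c k := by
    intro k
    have : (1:ℝ) < (2:ℝ) ^ (r k) := Real.one_lt_rpow_iff_of_pos (by norm_num) |>.mpr
      (Or.inl ⟨by norm_num, hr k⟩)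
    simp [hc_def]; linarith
  rw [hFeas] at hα
  obtain ⟨h1, h2, h3⟩ := hα
  set S : Fin K → ℝ := fun k => ∑ j ∈ univ.filter (fun j => k < j), α j with hS_def
  have hden : ∀ k, 0 < α k - c k * S k := fun k => sub_pos.mpr (h1 k)
  set γ : Fin K → ℝ := fun k => γth α k with hγ_def
  have hγval : ∀ k, γ k = c k / (α k - c k * S k) := fun k => hγth α k
  have hγpos : ∀ k, 0 < γ k := fun k => (hγval k) ▸ div_pos (hc k) (hden k)
  -- α satisfies the recursion
  have hrec : ∀ k, α k = c k / γ k + c k * S k := by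
    intro k
    have h := hγval k
    have hγne : γ k ≠ 0 := ne_of_gt (hγpos k)
    have hdne : α k - c k * S k ≠ 0 := ne_of_gt (hden k)
    field_simp at h ⊢
    nlinarith [h]
  have hαeq : ∀ k, α k = aAux c (fun k => c k / γ k) k :=
    aAux_unique c _ α hrec
  -- the new allocation
  set d' : Fin K → ℝ := fun k => c k / v k with hd'_def
  have hd'pos : ∀ k, 0 < d' k := fun k => div_pos (hc k) (hv k)
  set A : ℝ := ∑ k, aAux c d' k with hA_def
  have hApos : 0 < A :=
    Finset.sum_pos (fun k _ => aAux_pos c d' (fun k => le_of_lt (hc k)) hd'pos k) hne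
  set α' : Fin K → ℝ := fun k => aAux c d' k / A with hα'_def
  have hkey : ∀ k, α' k - c k * ∑ j ∈ univ.filter (fun j => k < j), α' j = d' k / A := by
    intro k
    have hs : (∑ j ∈ univ.filter (fun j => k < j), α' j)
        = (∑ j ∈ univ.filter (fun j => k < j), aAux c d' j) / A := by
      rw [Finset.sum_div]
    rw [hs]
    have := aAux_spec c d' k
    simp only [hα'_def]
    field_simp
    linarith [this]
  have hγ'val : ∀ k, γth α' k = A * v k := by
    intro k
    rw [hγth α' k]
    have : α' k - c k * ∑ j ∈ univ.filter (fun j => k < j), α' j = d' k / A := hkey k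
    rw [show ((2:ℝ) ^ (r k) - 1) = c k from rfl] at *
    rw [this, hd'_def]
    have hck := hc k
    have hvk := hv k
    field_simp
  have hα'feas : Feasible α' := by
    rw [hFeas]
    refine ⟨?_, ?_, ?_⟩
    · intro k
      have := hkey k
      have hpos : 0 < d' k / A := div_pos (hd'pos k) hApos
      rw [show ((2:ℝ) ^ (r k) - 1) = c k from rfl]
      clear_value c S γ d' A α'
      linarith [this, hpos]
    · rw [hα'_def]
      simp only
      rw [← Finset.sum_div, ← hA_def, div_self (ne_of_gt hApos)]
    · intro k l hkl
      rw [hγ'val k, hγ'val l]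
      exact mul_le_mul_of_nonneg_left (hvmono hkl) (le_of_lt hApos)
  -- values of new objective
  have hsup' : univ.sup' hne (fun k => γth α' k / v k) = A := by
    have : ∀ k ∈ univ, γth α' k / v k = A := by
      intro k _
      rw [hγ'val k, mul_div_assoc, div_self (ne_of_gt (hv k)), mul_one]
    rw [Finset.sup'_congr hne rfl this, Finset.sup'_const]
  set t : ℝ := univ.sup' hne (fun k => γth α k / v k) with ht_def
  have ht_le : ∀ k, γ k / v k ≤ t :=
    fun k => Finset.le_sup' (fun k => γth α k / v k) (mem_univ k)
  have ht_pos : 0 < t := lt_of_lt_of_le (div_pos (hγpos hne.choose) (hv hne.choose)) (ht_le hne.choose)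
  -- strict inequality at some point
  push_neg at hnoteq
  obtain ⟨k₁, l₁, hkl⟩ := hnoteq
  have hex : ∃ k₀, γ k₀ / v k₀ < t := by
    by_contra h
    push_neg at h
    have e1 : γ k₁ / v k₁ = t := le_antisymm (ht_le k₁) (h k₁)
    have e2 : γ l₁ / v l₁ = t := le_antisymm (ht_le l₁) (h l₁)
    exact hkl (e1.trans e2.symm)
  obtain ⟨k₀, hk₀⟩ := hex
  -- comparison
  have hle : ∀ k, d' k / t ≤ c k / γ k := by
    intro k
    rw [hd'_def]
    rw [div_div]
    apply div_le_div_of_nonneg_left (le_of_lt (hc k)) (hγpos k)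
    calc γ k ≤ t * v k := by
          have := ht_le k
          rw [div_le_iff₀ (hv k)] at this
          linarith
      _ = v k * t := mul_comm _ _
  have hlt : d' k₀ / t < c k₀ / γ k₀ := by
    rw [hd'_def, div_div]
    apply div_lt_div_of_pos_left (hc k₀) (hγpos k₀)
    calc γ k₀ < t * v k₀ := by
          rw [div_lt_iff₀ (hv k₀)] at hk₀
          linarith
      _ = v k₀ * t := mul_comm _ _
  have hsumlt : (∑ k, aAux c (fun k => d' k / t) k) < ∑ k, aAux c (fun k => c k / γ k) k := by
    apply Finset.sum_lt_sum
    · intro k _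
      exact aAux_mono c _ _ (fun k => le_of_lt (hc k)) hle k
    · exact ⟨k₀, mem_univ k₀, aAux_strict c _ _ (fun k => le_of_lt (hc k)) hle k₀ hlt⟩
  have hsum1 : (∑ k, aAux c (fun k => c k / γ k) k) = 1 := by
    rw [← h2]
    exact Finset.sum_congr rfl fun k _ => (hαeq k).symm
  have hsumdiv : (∑ k, aAux c (fun k => d' k / t) k) = A / t := by
    rw [hA_def, Finset.sum_div]
    exact Finset.sum_congr rfl fun k _ => aAux_div c d' t k
  have hAt : A < t := by
    rw [hsumdiv, hsum1] at hsumlt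
    exact (div_lt_one ht_pos).mp hsumlt
  exact ⟨α', hα'feas, by rw [hsup']; exact hAt⟩
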